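/- Let K be a valued field containing ℚ_p with continuous inclusion, f : ℚ_p → K continuous, and N ∈ ℕ. If Δ_{p^N}^{n+1} f(x) = 0 for all x ∈ ℚ_p, then for each a ∈ ℚ_p there exist constants a_0, ..., a_n ∈ K such that f(x) = a_0 + a_1 x + ⋯ + a_n x^n for all x ∈ a + p^N ℤ_p. -/

import Mathlib

/-- The difference operator `Δ_h f (x) = f (x + h) - f x`. -/
def dd {X Y : Type*} [Add X] [Sub Y] (h : X) (f : X → Y) : X → Y :=
  fun x => f (x + h) - f x

/-- Iterated difference `Δ_{h₁}(Δ_{h₂ ⋯ hₛ} f)` for a list of steps. -/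
def ddIter {X Y : Type*} [Add X] [Sub Y] (hs : List X) (f : X → Y) : X → Y :=
  hs.foldr dd f

theorem stmt12 {p : ℕ} [Fact p.Prime] {K : Type*} [NormedField K]
    (ι : ℚ_[p] →+* K) (hι : Continuous ι)
    (f : ℚ_[p] → K) (hf : Continuous f) (n N : ℕ)
    (H : ∀ x : ℚ_[p], (dd ((p : ℚ_[p]) ^ N))^[n + 1] f x = 0) :
    ∀ a : ℚ_[p], ∃ c : Fin (n + 1) → K,
      ∀ x : ℚ_[p], ‖x - a‖ ≤ (p : ℝ) ^ (-(N : ℤ)) →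
        f x = ∑ i : Fin (n + 1), c i * (ι x) ^ (i : ℕ) := by
  intro a
  set h : ℚ_[p] := (p : ℚ_[p]) ^ N with hh_def
  have hp0 : (p : ℚ_[p]) ≠ 0 := Nat.cast_ne_zero.mpr (Fact.out : p.Prime).ne_zero
  have hh : h ≠ 0 := pow_ne_zero _ hp0
  have hιinj : Function.Injective ι := ι.injective
  have hιh : ι h ≠ 0 := fun e => hh (hιinj (by simpa using e))
  haveI : CharZero K :=
    ⟨fun m k hmk => Nat.cast_injective (R := ℚ_[p])
      (hιinj (by rw [map_natCast, map_natCast, hmk]))⟩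
  have hdd : dd h = (fwdDiff h : (ℚ_[p] → K) → (ℚ_[p] → K)) := rfl
  -- higher differences vanish
  have hvanish : ∀ j : ℕ, n + 1 ≤ j → ∀ x, (fwdDiff h)^[j] f x = 0 := by
    intro j hj x
    obtain ⟨m, rfl⟩ := Nat.exists_eq_add_of_le hj
    rw [Nat.add_comm, Function.iterate_add_apply]
    have h0 : (fwdDiff h)^[n + 1] f = fun _ => (0 : K) := by
      funext y; rw [← hdd]; exact H y
    rw [h0]
    have : ∀ m : ℕ, (fwdDiff h)^[m] (fun _ => (0 : K)) = fun _ => (0 : K) := by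
      intro m
      apply Function.iterate_fixed
      funext y; simp [fwdDiff]
    rw [this]
  -- Newton formula truncated at n
  have key : ∀ k : ℕ, f (a + (k : ℚ_[p]) * h) =
      ∑ j ∈ Finset.range (n + 1), (k.choose j : K) * (fwdDiff h)^[j] f a := by
    intro k
    have hsm : (k : ℚ_[p]) * h = k • h := by rw [nsmul_eq_mul]
    rw [hsm, shift_eq_sum_fwdDiff_iter h f k a]
    have e1 : ∑ j ∈ Finset.range (k + 1), k.choose j • (fwdDiff h)^[j] f a =
        ∑ j ∈ Finset.range (max (k + 1) (n + 1)), k.choose j • (fwdDiff h)^[j] f a := by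
      apply Finset.sum_subset (Finset.range_subset_range.mpr (le_max_left _ _))
      intro j _ hj
      have : k < j := by simpa using Finset.mem_range.not.mp hj
      rw [Nat.choose_eq_zero_of_lt this, zero_smul]
    have e2 : ∑ j ∈ Finset.range (n + 1), (k.choose j : K) * (fwdDiff h)^[j] f a =
        ∑ j ∈ Finset.range (max (k + 1) (n + 1)), (k.choose j : K) * (fwdDiff h)^[j] f a := by
      apply Finset.sum_subset (Finset.range_subset_range.mpr (le_max_right _ _))
      intro j _ hj
      have : n + 1 ≤ j := by simpa using Finset.mem_range.not.mp hj
      rw [hvanish j this, mul_zero]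
    rw [e1, e2]
    refine Finset.sum_congr rfl fun j _ => ?_
    rw [nsmul_eq_mul]
  -- the candidate polynomial
  set L := Polynomial.C (ι h)⁻¹ * (Polynomial.X - Polynomial.C (ι a)) with hL
  set P := ∑ j ∈ Finset.range (n + 1),
      Polynomial.C ((Nat.factorial j : K)⁻¹ * (fwdDiff h)^[j] f a) * (descPochhammer K j).comp L with hP
  have hLdeg : L.natDegree ≤ 1 := by
    refine (Polynomial.natDegree_C_mul_le _ _).trans ?_
    simp [Polynomial.natDegree_X_sub_C]
  have hPdeg : P.natDegree ≤ n := by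
    refine Polynomial.natDegree_sum_le_of_forall_le _ _ fun j hj => ?_
    refine (Polynomial.natDegree_C_mul_le _ _).trans ?_
    refine (Polynomial.natDegree_comp_le).trans ?_
    rw [descPochhammer_natDegree]
    calc j * L.natDegree ≤ j * 1 := Nat.mul_le_mul_left _ hLdeg
      _ = j := Nat.mul_one j
      _ ≤ n := Nat.lt_succ_iff.mp (Finset.mem_range.mp hj)
  -- P interpolates f at the points a + k h
  have hPnat : ∀ k : ℕ, P.eval (ι (a + (k : ℚ_[p]) * h)) = f (a + (k : ℚ_[p]) * h) := by
    intro k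
    have hLeval : L.eval (ι (a + (k : ℚ_[p]) * h)) = (k : K) := by
      simp only [hL, Polynomial.eval_mul, Polynomial.eval_C, Polynomial.eval_sub,
        Polynomial.eval_X, map_add, map_mul, map_natCast]
      field_simp
      ring
    rw [key k, hP]
    rw [Polynomial.eval_finset_sum]
    refine Finset.sum_congr rfl fun j _ => ?_
    rw [Polynomial.eval_mul, Polynomial.eval_C, Polynomial.eval_comp, hLeval,
      descPochhammer_eval_eq_descFactorial, Nat.descFactorial_eq_factorial_mul_choose]
    have hj0 : (Nat.factorial j : K) ≠ 0 := Nat.cast_ne_zero.mpr (Nat.factorial_ne_zero j)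
    push_cast
    field_simp
  -- g := f - P∘ι vanishes on the ball
  set g := fun x : ℚ_[p] => f x - P.eval (ι x) with hg
  have hgcont : Continuous g := hf.sub ((Polynomial.continuous P).comp hι)
  have hgball : ∀ x : ℚ_[p], ‖x - a‖ ≤ (p : ℝ) ^ (-(N : ℤ)) → g x = 0 := by
    intro x hx
    set G := fun z : ℤ_[p] => g (a + (z : ℚ_[p]) * h) with hG
    have hGcont : Continuous G := by
      exact hgcont.comp (continuous_const.add (continuous_subtype_val.mul continuous_const))
    have hGzero : G = fun _ => 0 := by
      refine PadicInt.denseRange_natCast.equalizer hGcont continuous_const (funext fun k => ?_)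
      simp only [Function.comp_apply, hG]
      have : ((k : ℤ_[p]) : ℚ_[p]) = (k : ℚ_[p]) := by push_cast; rfl
      rw [this]
      show f _ - _ = 0
      rw [hPnat k, sub_self]
    have hz : ‖(x - a) / h‖ ≤ 1 := by
      rw [norm_div]
      have hn : ‖h‖ = (p : ℝ) ^ (-(N : ℤ)) := Padic.norm_p_pow N
      rw [hn]
      have hpos : (0 : ℝ) < (p : ℝ) ^ (-(N : ℤ)) := by
        apply zpow_pos
        exact_mod_cast (Fact.out : p.Prime).pos
      rw [div_le_one hpos]
      exact hx
    have := congrFun hGzero ⟨(x - a) / h, hz⟩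
    simpa [hG, div_mul_cancel₀ _ hh] using this
  refine ⟨fun i => P.coeff i, fun x hx => ?_⟩
  have hfx : f x = P.eval (ι x) := by
    have := hgball x hx
    simpa [hg, sub_eq_zero] using this
  rw [hfx, Polynomial.eval_eq_sum_range' (Nat.lt_succ_of_le hPdeg)]
  exact (Fin.sum_univ_eq_sum_range (fun i => P.coeff i * ι x ^ i) (n + 1)).symm
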